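/- Let R = O_F/p^j (F a number field, p a prime ideal, j ≥ 1), and let A ∈ M_d(R) be a matrix whose characteristic polynomial χ has d distinct roots λ_1, …, λ_d in R whose pairwise differences λ_i − λ_{i'} are units in R (i.e., distinct modulo p). Then A is diagonalizable over R: there exists a basis of R^d consisting of eigenvectors of A. -/

import Mathlib

open NumberField Polynomial

set_option synthInstance.maxHeartbeats 1000000
set_option maxHeartbeats 1000000

lemma aux_map_aeval {R S : Type*} [CommRing R] [CommRing S] {n : Type*} [Fintype n]
    [DecidableEq n] (f : R →+* S) (A : Matrix n n R) (g : R[X]) :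
    (Polynomial.aeval A g).map f = Polynomial.aeval (A.map f) (g.map f) := by
  show f.mapMatrix (Polynomial.aeval A g) = _
  rw [Polynomial.aeval_def, Polynomial.hom_eval₂, Polynomial.aeval_def, Polynomial.eval₂_map]
  congr 1
  ext r : 1
  ext i j
  simp [Matrix.algebraMap_matrix_apply, apply_ite f]

lemma aux_eval_charpoly {R : Type*} [CommRing R] {n : Type*} [Fintype n] [DecidableEq n]
    (A : Matrix n n R) (r : R) :
    A.charpoly.eval r = (r • (1 : Matrix n n R) - A).det := by
  rw [Matrix.charpoly, ← Polynomial.coe_evalRingHom, RingHom.map_det]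
  congr 1
  ext i j
  by_cases h : i = j <;>
    simp [Matrix.charmatrix_apply, Matrix.one_apply, Matrix.diagonal_apply, h]

lemma aux_aeval_mulVec {k : Type*} [Field k] {n : Type*} [Fintype n] [DecidableEq n]
    (M : Matrix n n k) (g : k[X]) (μ : k) (x : n → k) (hx : x ≠ 0)
    (h : M.mulVec x = μ • x) :
    (Polynomial.aeval M g).mulVec x = g.eval μ • x := by
  have key : ∀ (P : Matrix n n k), P.mulVec x = Matrix.toLinAlgEquiv' P x := by
    intro P
    rw [Matrix.toLinAlgEquiv'_apply]
  have h2 : Matrix.toLinAlgEquiv' (Polynomial.aeval M g)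
      = Polynomial.aeval (Matrix.toLinAlgEquiv' M) g :=
    (Polynomial.aeval_algHom_apply Matrix.toLinAlgEquiv' M g).symm
  rw [key, h2]
  exact Module.End.aeval_apply_of_hasEigenvector
    ⟨Module.End.mem_eigenspace_iff.2 (by rw [← key]; exact h), hx⟩

lemma aux_main {R k : Type*} [CommRing R] [Field k] (q : R →+* k)
    (hqsurj : Function.Surjective q) (hunit : ∀ x : R, q x ≠ 0 → IsUnit x)
    (d : ℕ) (A : Matrix (Fin d) (Fin d) R) (lam : Fin d → R)
    (hdiff : ∀ i i' : Fin d, i ≠ i' → IsUnit (lam i - lam i'))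
    (hchar : Matrix.charpoly A = ∏ i, (X - C (lam i))) :
    ∃ b : Module.Basis (Fin d) R (Fin d → R), ∀ i, A.mulVec (b i) = lam i • b i := by
  classical
  set Ab : Matrix (Fin d) (Fin d) k := A.map q with hAb
  set lamb : Fin d → k := fun i => q (lam i) with hlamb
  have hlne : ∀ i i' : Fin d, i ≠ i' → lamb i ≠ lamb i' := by
    intro i i' h hEq
    have h2 := (hdiff i i' h).map q
    rw [map_sub] at h2
    exact h2.ne_zero (sub_eq_zero.2 hEq)
  have hcharb : Ab.charpoly = ∏ i, (X - C (lamb i)) := by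
    rw [hAb, Matrix.charpoly_map, hchar, Polynomial.map_prod]
    simp [Polynomial.map_sub]
    rfl
  -- eigenvectors over the residue field
  have hker : ∀ i, ∃ vv : Fin d → k, vv ≠ 0 ∧ Ab.mulVec vv = lamb i • vv := by
    intro i
    have hdet : (Ab - lamb i • 1).det = 0 := by
      have h1 : (lamb i • (1 : Matrix (Fin d) (Fin d) k) - Ab).det = 0 := by
        rw [← aux_eval_charpoly, hcharb, Polynomial.eval_prod]
        exact Finset.prod_eq_zero (Finset.mem_univ i) (by simp)
      have h3 : Ab - lamb i • 1 = -(lamb i • (1 : Matrix (Fin d) (Fin d) k) - Ab) := by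
        rw [neg_sub]
      rw [h3, Matrix.det_neg, h1, mul_zero]
    obtain ⟨vv, hv, hv0⟩ := Matrix.exists_mulVec_eq_zero_iff.2 hdet
    refine ⟨vv, hv, ?_⟩
    rw [Matrix.sub_mulVec, Matrix.smul_mulVec, Matrix.one_mulVec] at hv0
    exact sub_eq_zero.1 hv0
  choose wb hwb0 hwbeq using hker
  have hlift : ∀ (i : Fin d) (r : Fin d), ∃ x, q x = wb i r := fun i r => hqsurj _
  choose w hw using hlift
  have heig : ∀ i, A.mulVec ((Polynomial.aeval A
        (∏ i' ∈ Finset.univ.erase i, ((X : R[X]) - C (lam i')))).mulVec (w i))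
      = lam i • (Polynomial.aeval A
        (∏ i' ∈ Finset.univ.erase i, ((X : R[X]) - C (lam i')))).mulVec (w i) := by
    intro i
    set N : Matrix (Fin d) (Fin d) R :=
      Polynomial.aeval A (∏ i' ∈ Finset.univ.erase i, ((X : R[X]) - C (lam i'))) with hNdef
    have hx : Polynomial.aeval A ((X : R[X]) - C (lam i)) = A - lam i • 1 := by
      rw [map_sub, Polynomial.aeval_X, Polynomial.aeval_C, Algebra.algebraMap_eq_smul_one]
    have h0 : (A - lam i • 1) * N = 0 := by
      have h1 : ((X : R[X]) - C (lam i)) * ∏ i' ∈ Finset.univ.erase i, ((X : R[X]) - C (lam i'))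
          = A.charpoly := by
        rw [hchar]
        exact Finset.mul_prod_erase Finset.univ (fun i' => (X : R[X]) - C (lam i'))
          (Finset.mem_univ i)
      have h2 := congrArg (Polynomial.aeval A) h1
      rw [map_mul, Matrix.aeval_self_charpoly, hx, ← hNdef] at h2
      exact h2
    have hAN : A * N = lam i • N := by
      rw [sub_mul, smul_mul_assoc, one_mul, sub_eq_zero] at h0
      exact h0
    rw [Matrix.mulVec_mulVec, hAN, Matrix.smul_mulVec]
  set v : Fin d → Fin d → R := fun i => (Polynomial.aeval A
    (∏ i' ∈ Finset.univ.erase i, ((X : R[X]) - C (lam i')))).mulVec (w i) with hvdef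
  set vb : Fin d → Fin d → k :=
    fun i => (∏ i' ∈ Finset.univ.erase i, (lamb i - lamb i')) • wb i with hvbdef
  -- reduction of v mod the maximal ideal
  have hred : ∀ i r, q (v i r) = vb i r := by
    intro i r
    rw [hvdef]
    show q (((Polynomial.aeval A
      (∏ i' ∈ Finset.univ.erase i, ((X : R[X]) - C (lam i')))).mulVec (w i) r)) = vb i r
    rw [RingHom.map_mulVec]
    have hwc : (⇑q ∘ w i) = wb i := funext (hw i)
    have hgm : ((∏ i' ∈ Finset.univ.erase i, ((X : R[X]) - C (lam i'))).map q)
        = ∏ i' ∈ Finset.univ.erase i, ((X : k[X]) - C (lamb i')) := by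
      rw [Polynomial.map_prod]
      simp
      rfl
    rw [hwc, aux_map_aeval, hgm, ← hAb,
      aux_aeval_mulVec Ab _ (lamb i) (wb i) (hwb0 i) (hwbeq i)]
    rw [hvbdef]
    simp [Polynomial.eval_prod]
  -- nonvanishing of the product of eigenvalue differences
  have hc0 : ∀ i, (∏ i' ∈ Finset.univ.erase i, (lamb i - lamb i')) ≠ 0 := by
    intro i
    rw [Finset.prod_ne_zero_iff]
    intro i' hi'
    exact sub_ne_zero.2 (hlne i i' (Finset.mem_erase.1 hi').1.symm)
  -- linear independence of the reduced eigenvectors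
  have hli : LinearIndependent k vb := by
    have hinj : Function.Injective lamb := by
      intro a b hab
      by_contra hne
      exact hlne a b hne hab
    refine Module.End.eigenvectors_linearIndependent' (Matrix.toLinAlgEquiv' Ab) lamb hinj vb
      (fun i => ⟨Module.End.mem_eigenspace_iff.2 ?_, smul_ne_zero (hc0 i) (hwb0 i)⟩)
    rw [Matrix.toLinAlgEquiv'_apply, hvbdef]
    show Ab.mulVec ((∏ i' ∈ Finset.univ.erase i, (lamb i - lamb i')) • wb i) = _
    rw [Matrix.mulVec_smul, hwbeq i, smul_comm]
  -- the matrix of eigenvectors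
  set Mv : Matrix (Fin d) (Fin d) R := Matrix.of (fun r i => v i r) with hMv
  have hdetb : (Mv.map q).det ≠ 0 := by
    intro h0
    obtain ⟨c, hc, hc0'⟩ := Matrix.exists_mulVec_eq_zero_iff.2 h0
    refine hc (funext (fun i => ?_))
    refine Fintype.linearIndependent_iff.1 hli c ?_ i
    funext r
    have h1 := congrFun hc0' r
    simp only [Matrix.mulVec, dotProduct, Matrix.map_apply, hMv, Matrix.of_apply,
      Pi.zero_apply] at h1
    simp only [Finset.sum_apply, Pi.smul_apply, smul_eq_mul, Pi.zero_apply]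
    rw [← h1]
    refine Finset.sum_congr rfl (fun i' _ => ?_)
    rw [hred i' r, mul_comm]
  have hdet : IsUnit Mv.det := by
    refine hunit _ (fun h0 => hdetb ?_)
    have hh := RingHom.map_det q Mv
    rw [h0] at hh
    exact hh.symm
  have hinvM : Invertible Mv := Mv.invertibleOfIsUnitDet hdet
  refine ⟨(Pi.basisFun R (Fin d)).map (Mv.toLinearEquiv' hinvM), fun i => ?_⟩
  have hb : ((Pi.basisFun R (Fin d)).map (Mv.toLinearEquiv' hinvM)) i = v i := by
    rw [Module.Basis.map_apply, Pi.basisFun_apply]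
    show Matrix.toLin' Mv (Pi.single i 1) = v i
    rw [Matrix.toLin'_apply, Matrix.mulVec_single]
    funext r
    simp [hMv]
  rw [hb]
  exact heig i

/-- Over `R = 𝓞_F/𝔭^j`, a matrix whose characteristic polynomial has `d` distinct
roots in `R` with pairwise differences that are units is diagonalizable: `R^d`
admits a basis of eigenvectors. -/
theorem statement_16 (F : Type) [Field F] [NumberField F]
    (p : Ideal (𝓞 F)) (hp : p.IsPrime) (hpbot : p ≠ ⊥) (j : ℕ) (hj : 1 ≤ j)
    (d : ℕ) (hd : 1 ≤ d)
    (A : Matrix (Fin d) (Fin d) (𝓞 F ⧸ p ^ j))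
    (lam : Fin d → 𝓞 F ⧸ p ^ j)
    (hdiff : ∀ i i' : Fin d, i ≠ i' → IsUnit (lam i - lam i'))
    (hchar : Matrix.charpoly A = ∏ i, (X - C (lam i))) :
    ∃ b : Module.Basis (Fin d) (𝓞 F ⧸ p ^ j) (Fin d → 𝓞 F ⧸ p ^ j),
      ∀ i, A.mulVec (b i) = lam i • b i := by
  classical
  haveI : p.IsMaximal := hp.isMaximal hpbot
  letI : Field (𝓞 F ⧸ p) := Ideal.Quotient.field p
  have hle : p ^ j ≤ p := Ideal.pow_le_self (by omega)
  set q : (𝓞 F ⧸ p ^ j) →+* (𝓞 F ⧸ p) := Ideal.Quotient.factor hle with hq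
  have hqsurj : Function.Surjective q := by
    intro y
    obtain ⟨a, rfl⟩ := Ideal.Quotient.mk_surjective y
    exact ⟨Ideal.Quotient.mk _ a, Ideal.Quotient.factor_mk hle a⟩
  have hunit : ∀ x : 𝓞 F ⧸ p ^ j, q x ≠ 0 → IsUnit x := by
    intro x hx
    obtain ⟨a, rfl⟩ := Ideal.Quotient.mk_surjective x
    rw [hq, Ideal.Quotient.factor_mk, Ne, Ideal.Quotient.eq_zero_iff_mem] at hx
    have : IsUnit (Ideal.Quotient.mk p a) :=
      isUnit_iff_ne_zero.2 (by rwa [Ne, Ideal.Quotient.eq_zero_iff_mem])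
    obtain ⟨b, hb⟩ := isUnit_iff_exists_inv.1 this
    obtain ⟨b', rfl⟩ := Ideal.Quotient.mk_surjective b
    have hn : a * b' - 1 ∈ p := by
      rw [← map_mul] at hb
      rwa [← Ideal.Quotient.eq_zero_iff_mem, map_sub, map_one, map_mul, sub_eq_zero]
    have hnil : IsNilpotent (Ideal.Quotient.mk (p ^ j) (a * b' - 1)) := by
      refine ⟨j, ?_⟩
      rw [← map_pow, Ideal.Quotient.eq_zero_iff_mem]
      exact Ideal.pow_mem_pow hn j
    have : IsUnit (Ideal.Quotient.mk (p ^ j) a * Ideal.Quotient.mk (p ^ j) b') := by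
      have h1 := hnil.isUnit_one_add
      have heq : (1 : 𝓞 F ⧸ p ^ j) + Ideal.Quotient.mk (p ^ j) (a * b' - 1)
          = Ideal.Quotient.mk (p ^ j) (a * b') := by
        rw [map_sub, map_one]; ring
      rw [heq] at h1
      rwa [← map_mul]
    exact isUnit_of_mul_isUnit_left this
  exact aux_main q hqsurj hunit d A lam hdiff hchar
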